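/- Let 𝕊 be a finite set, and for each i ∈ 𝕊 let λ_i : ℝ → ℝ be continuous and μ_i ≥ 1 a constant. Let t_0 < t_1 < ⋯ < t_k < t_{k+1} be real numbers and i_0, …, i_k ∈ 𝕊. For each 0 ≤ l ≤ k let v_l : [t_l, t_{l+1}] → ℝ be continuous, nonnegative, differentiable on (t_l, t_{l+1}), with v_l'(s) ≤ λ_{i_l}(s)·v_l(s) for all s ∈ (t_l, t_{l+1}), and suppose v_l(t_l) ≤ μ_{i_l}·v_{l−1}(t_l) for each 1 ≤ l ≤ k. Then for every t ∈ [t_k, t_{k+1}], v_k(t) ≤ v_0(t_0) · (∏_{l=1}^{k} μ_{i_l}) · exp( Σ_{l=0}^{k−1} ∫_{t_l}^{t_{l+1}} λ_{i_l}(h) dh + ∫_{t_k}^{t} λ_{i_k}(h) dh ). -/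

import Mathlib

open Set Filter

/-- Iterated estimate for indefinite multiple Lyapunov functions along a switched
trajectory: on each dwell interval `[t_l, t_{l+1}]` the Lyapunov value obeys
`v' ≤ λ_{i_l} · v`, and at each switching time it may jump up by a factor `μ_{i_l} ≥ 1`. -/
lemma gronwall_one (lam : ℝ → ℝ) (hlam : Continuous lam) (a b : ℝ) (v : ℝ → ℝ)
    (hc : ContinuousOn v (Set.Icc a b)) (hd : DifferentiableOn ℝ v (Set.Ioo a b))
    (hder : ∀ s ∈ Set.Ioo a b, deriv v s ≤ lam s * v s) :
    ∀ s ∈ Set.Icc a b, v s ≤ v a * Real.exp (∫ h in a..s, lam h) := by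
  set F : ℝ → ℝ := fun s => ∫ h in a..s, lam h with hF
  have hFd : ∀ s : ℝ, HasDerivAt F (lam s) s := fun s =>
    (hlam.integral_hasStrictDerivAt a s).hasDerivAt
  have hFc : Continuous F := Differentiable.continuous (fun s => (hFd s).differentiableAt)
  set g : ℝ → ℝ := fun s => v s * Real.exp (-F s) with hg
  have hE : ∀ s : ℝ, HasDerivAt (fun u => Real.exp (-F u)) (-lam s * Real.exp (-F s)) s :=
    fun s => by simpa [mul_comm] using ((hFd s).neg).exp
  have key : ∀ s ∈ Set.Ioo a b, HasDerivAt g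
      ((deriv v s - lam s * v s) * Real.exp (-F s)) s := by
    intro s hs
    have hdv : DifferentiableAt ℝ v s := (hd s hs).differentiableAt (isOpen_Ioo.mem_nhds hs)
    have := hdv.hasDerivAt.mul (hE s)
    convert this using 1
    · rfl
    · rfl
    · rfl
    · ring
  have hganti : AntitoneOn g (Set.Icc a b) := by
    apply antitoneOn_of_deriv_nonpos (convex_Icc a b)
    · exact hc.mul ((Real.continuous_exp.comp hFc.neg).continuousOn)
    · intro s hs
      rw [interior_Icc] at hs
      exact (key s hs).differentiableAt.differentiableWithinAt
    · intro s hs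
      rw [interior_Icc] at hs
      rw [(key s hs).deriv]
      have h1 : deriv v s - lam s * v s ≤ 0 := sub_nonpos.mpr (hder s hs)
      exact mul_nonpos_of_nonpos_of_nonneg h1 (Real.exp_pos _).le
  intro s hs
  have := hganti (left_mem_Icc.mpr (hs.1.trans hs.2)) hs hs.1
  have hga : g a = v a := by
    simp [hg, hF, intervalIntegral.integral_same]
  rw [hga] at this
  have : v s * Real.exp (-F s) ≤ v a := this
  have h2 := mul_le_mul_of_nonneg_right this (Real.exp_pos (F s)).le
  rwa [mul_assoc, ← Real.exp_add, neg_add_cancel, Real.exp_zero, mul_one] at h2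

theorem stmt_1 {𝕊 : Type*} [Fintype 𝕊] (lam : 𝕊 → ℝ → ℝ) (μ : 𝕊 → ℝ)
    (hlam : ∀ i, Continuous (lam i)) (hμ : ∀ i, 1 ≤ μ i)
    (k : ℕ) (t : ℕ → ℝ) (ht : ∀ l ≤ k, t l < t (l + 1))
    (idx : ℕ → 𝕊) (v : ℕ → ℝ → ℝ)
    (hv_cont : ∀ l ≤ k, ContinuousOn (v l) (Set.Icc (t l) (t (l + 1))))
    (hv_nonneg : ∀ l ≤ k, ∀ s ∈ Set.Icc (t l) (t (l + 1)), 0 ≤ v l s)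
    (hv_diff : ∀ l ≤ k, DifferentiableOn ℝ (v l) (Set.Ioo (t l) (t (l + 1))))
    (hv_deriv : ∀ l ≤ k, ∀ s ∈ Set.Ioo (t l) (t (l + 1)),
      deriv (v l) s ≤ lam (idx l) s * v l s)
    (hjump : ∀ l, 1 ≤ l → l ≤ k → v l (t l) ≤ μ (idx l) * v (l - 1) (t l)) :
    ∀ s ∈ Set.Icc (t k) (t (k + 1)),
      v k s ≤ v 0 (t 0) * (∏ l ∈ Finset.Icc 1 k, μ (idx l)) *
        Real.exp ((∑ l ∈ Finset.range k, ∫ h in (t l)..(t (l + 1)), lam (idx l) h) +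
          ∫ h in (t k)..s, lam (idx k) h) := by
  induction k with
  | zero =>
    intro s hs
    simpa using gronwall_one (lam (idx 0)) (hlam _) (t 0) (t 1) (v 0)
      (hv_cont 0 le_rfl) (hv_diff 0 le_rfl) (hv_deriv 0 le_rfl) s hs
  | succ k IH =>
    have hle : ∀ l, l ≤ k → l ≤ k + 1 := fun l hl => hl.trans k.le_succ
    have IH' := IH (fun l hl => ht l (hle l hl)) (fun l hl => hv_cont l (hle l hl))
      (fun l hl => hv_nonneg l (hle l hl)) (fun l hl => hv_diff l (hle l hl))
      (fun l hl => hv_deriv l (hle l hl)) (fun l h1 hl => hjump l h1 (hle l hl))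
    intro s hs
    have h1 := gronwall_one (lam (idx (k+1))) (hlam _) (t (k+1)) (t (k+2)) (v (k+1))
      (hv_cont _ le_rfl) (hv_diff _ le_rfl) (hv_deriv _ le_rfl) s hs
    have h2 := hjump (k+1) (Nat.succ_le_succ (Nat.zero_le k)) le_rfl
    simp only [Nat.add_sub_cancel] at h2
    have h3 := IH' (t (k+1)) ⟨(ht k (hle k le_rfl)).le, le_rfl⟩
    have hμ0 : (0:ℝ) ≤ μ (idx (k+1)) := le_trans zero_le_one (hμ _)
    set J := ∫ h in (t (k+1))..s, lam (idx (k+1)) h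
    set Sf := (∑ l ∈ Finset.range k, ∫ h in (t l)..(t (l + 1)), lam (idx l) h) +
          ∫ h in (t k)..(t (k+1)), lam (idx k) h
    set P := ∏ l ∈ Finset.Icc 1 k, μ (idx l)
    have hsum : (∑ l ∈ Finset.range (k+1), ∫ h in (t l)..(t (l + 1)), lam (idx l) h) = Sf :=
      Finset.sum_range_succ _ k
    have hprod : (∏ l ∈ Finset.Icc 1 (k+1), μ (idx l)) = P * μ (idx (k+1)) :=
      Finset.prod_Icc_succ_top (Nat.succ_le_succ (Nat.zero_le k)) _
    rw [hsum, hprod]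
    calc v (k+1) s ≤ v (k+1) (t (k+1)) * Real.exp J := h1
      _ ≤ (μ (idx (k+1)) * v k (t (k+1))) * Real.exp J :=
          mul_le_mul_of_nonneg_right h2 (Real.exp_pos J).le
      _ ≤ (μ (idx (k+1)) * (v 0 (t 0) * P * Real.exp Sf)) * Real.exp J :=
          mul_le_mul_of_nonneg_right (mul_le_mul_of_nonneg_left h3 hμ0) (Real.exp_pos J).le
      _ = v 0 (t 0) * (P * μ (idx (k+1))) * Real.exp (Sf + J) := by
          have hq : ∀ (a b c d e : ℝ),
              a * (b * c * Real.exp d) * Real.exp e = b * (c * a) * Real.exp (d + e) := by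
            intro a b c d e; rw [Real.exp_add]; ring
          exact hq _ _ _ _ _
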